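/- The Dirichlet domain D is the topological interior of D̄; moreover, a point H ∈ E belongs to D if and only if H is the unique element of minimal norm in the coset H + Γ. -/

import Mathlib

open Metric

/-- Proposition 4.3(iii) of [SS18]: the Dirichlet domain
`D = {H : ‖H‖ < ‖H + γ‖ for all γ ∈ Γ, γ ≠ 0}` of a full-rank lattice `Γ`
is the interior of `D̄ = {H : ‖H‖ ≤ ‖H + γ‖ for all γ ∈ Γ}`; moreover
`H ∈ D` iff `H` is the unique element of minimal norm in the coset `H + Γ`. -/
theorem dirichlet_interior_and_unique_min {E : Type*}
    [NormedAddCommGroup E] [InnerProductSpace ℝ E] [FiniteDimensional ℝ E]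
    (Γ : AddSubgroup E) [DiscreteTopology Γ]
    (hspan : Submodule.span ℝ (Γ : Set E) = ⊤) :
    {H : E | ∀ γ ∈ Γ, γ ≠ 0 → ‖H‖ < ‖H + γ‖} =
      interior {H : E | ∀ γ ∈ Γ, ‖H‖ ≤ ‖H + γ‖} ∧
    ∀ H : E, (∀ γ ∈ Γ, γ ≠ 0 → ‖H‖ < ‖H + γ‖) ↔
      (∀ x : E, x - H ∈ Γ → x ≠ H → ‖H‖ < ‖x‖) := by
  constructor
  · apply Set.Subset.antisymm
    · -- D is open and contained in D̄, hence D ⊆ interior D̄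
      apply interior_maximal
      · intro H hH γ hγ
        rcases eq_or_ne γ 0 with rfl | hne
        · simp
        · exact (hH γ hγ hne).le
      · -- D is open
        classical
        rw [Metric.isOpen_iff]
        intro H hH
        set R : ℝ := 2 * ‖H‖ + 2 with hR
        have hclosed : IsClosed (Γ : Set E) := AddSubgroup.isClosed_of_discrete
        have hfin : (closedBall (0 : E) R ∩ (Γ : Set E)).Finite :=
          Metric.finite_isBounded_inter_isClosed DiscreteTopology.isDiscrete Metric.isBounded_closedBall hclosed
        set T : Finset E := hfin.toFinset.filter (· ≠ 0) with hT
        set A : Finset ℝ := insert 1 (T.image fun γ => (‖H + γ‖ - ‖H‖) / 2) with hA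
        have hAne : A.Nonempty := ⟨1, by simp [hA]⟩
        set ε : ℝ := A.min' hAne with hε
        have hεle : ∀ a ∈ A, ε ≤ a := fun a ha => Finset.min'_le _ _ ha
        have hε1 : ε ≤ 1 := hεle 1 (by simp [hA])
        have hεpos : 0 < ε := by
          rw [hε, Finset.lt_min'_iff]
          intro a ha
          rw [hA, Finset.mem_insert] at ha
          rcases ha with h1 | h2
          · rw [h1]; norm_num
          · obtain ⟨γ, hγT, hγe⟩ := Finset.mem_image.mp h2
            rw [hT, Finset.mem_filter, Set.Finite.mem_toFinset] at hγT
            obtain ⟨hγmem, hγne⟩ := hγT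
            have := hH γ hγmem.2 (by simpa using hγne)
            rw [← hγe]; linarith
        refine ⟨ε, hεpos, ?_⟩
        intro H' hH'
        rw [mem_ball, dist_eq_norm] at hH'
        intro γ hγ hγne
        have hH'n : ‖H'‖ < ‖H‖ + ε := by
          have := norm_sub_norm_le H' H; linarith
        by_cases hcase : ‖γ‖ ≤ R
        · have hγT : γ ∈ T := by
            rw [hT, Finset.mem_filter, Set.Finite.mem_toFinset]
            exact ⟨⟨by simpa [mem_closedBall, dist_eq_norm] using hcase, hγ⟩, by simpa using hγne⟩
          have hεγ : ε ≤ (‖H + γ‖ - ‖H‖) / 2 :=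
            hεle _ (by rw [hA]; exact Finset.mem_insert_of_mem (Finset.mem_image_of_mem _ hγT))
          have hd : ‖H + γ‖ - ‖H' + γ‖ ≤ ‖H' - H‖ := by
            have h1 := norm_sub_norm_le (H + γ) (H' + γ)
            have h2 : H + γ - (H' + γ) = -(H' - H) := by abel
            rw [h2, norm_neg] at h1
            linarith
          linarith
        · push_neg at hcase
          have h0 : H' + γ - H' = γ := by abel
          have h1 : ‖γ‖ ≤ ‖H' + γ‖ + ‖H'‖ := by
            have := norm_sub_le (H' + γ) H'
            rwa [h0] at this
          linarith
    · -- interior D̄ ⊆ D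
      intro H hH γ hγ hγne
      have hle : ‖H‖ ≤ ‖H + γ‖ := interior_subset hH γ hγ
      rcases lt_or_eq_of_le hle with h | h
      · exact h
      exfalso
      obtain ⟨ε, hεpos, hball⟩ :=
        Metric.mem_nhds_iff.mp (mem_interior_iff_mem_nhds.mp hH)
      have hγn : (0 : ℝ) < ‖γ‖ := norm_pos_iff.mpr hγne
      set t : ℝ := ε / (2 * (‖γ‖ + 1)) with ht
      have htpos : 0 < t := by positivity
      have htγ : t * ‖γ‖ < ε := by
        rw [ht, div_mul_eq_mul_div, div_lt_iff₀ (by positivity)]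
        nlinarith
      have hmem : H - t • γ ∈ ball H ε := by
        rw [mem_ball, dist_eq_norm]
        have : H - t • γ - H = -(t • γ) := by abel
        rw [this, norm_neg, norm_smul, Real.norm_eq_abs, abs_of_pos htpos]
        exact htγ
      have hle' : ‖H - t • γ‖ ≤ ‖H - t • γ + γ‖ := hball hmem γ hγ
      have hrw : H - t • γ + γ = H + (1 - t) • γ := by
        rw [sub_smul, one_smul]; abel
      rw [hrw] at hle'
      have hinner : 2 * (inner ℝ H γ : ℝ) + ‖γ‖ ^ 2 = 0 := by
        have h1 : ‖H + γ‖ ^ 2 = ‖H‖ ^ 2 + 2 * (inner ℝ H γ : ℝ) + ‖γ‖ ^ 2 :=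
          norm_add_sq_real H γ
        nlinarith [norm_nonneg H, norm_nonneg (H + γ)]
      have hi : (inner ℝ H γ : ℝ) = -‖γ‖ ^ 2 / 2 := by linarith
      have e1 : ‖H - t • γ‖ ^ 2 = ‖H‖ ^ 2 + t * ‖γ‖ ^ 2 + t ^ 2 * ‖γ‖ ^ 2 := by
        rw [norm_sub_sq_real, real_inner_smul_right, norm_smul, Real.norm_eq_abs,
          mul_pow, sq_abs, hi]
        ring
      have e2 : ‖H + (1 - t) • γ‖ ^ 2 = ‖H‖ ^ 2 + (t ^ 2 - t) * ‖γ‖ ^ 2 := by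
        rw [norm_add_sq_real, real_inner_smul_right, norm_smul, Real.norm_eq_abs,
          mul_pow, sq_abs, hi]
        ring
      have hsq : ‖H - t • γ‖ ^ 2 ≤ ‖H + (1 - t) • γ‖ ^ 2 :=
        pow_le_pow_left₀ (norm_nonneg _) hle' 2
      have hpos : 0 < t * ‖γ‖ ^ 2 := mul_pos htpos (pow_pos hγn 2)
      rw [e1, e2] at hsq
      nlinarith
  · intro H
    constructor
    · intro h x hx hxne
      have := h (x - H) hx (by intro hc; apply hxne; rwa [sub_eq_zero] at hc)
      simpa using this
    · intro h γ hγ hγne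
      have := h (H + γ) (by simpa using hγ) (by simpa using hγne)
      exact this
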